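/- For every β > 2 and every n ∈ ℕ, the series Σ_{k=1}^∞ (β²−4)·k·p_β^k·P̃_{β,n}(√(β²−4)·k)² converges and its sum equals n!·(n+1)!; that is, the squared L²(ν̃_β)-norm of the n-th monic Meixner-type polynomial equals n!·(n+1)!. -/

import Mathlib

/-- The monic polynomials of Meixner's type `P̃_{β,n}`, defined by the three-term recurrence
`P̃_{β,0}(s) = 1`, `P̃_{β,1}(s) = s - β`, and
`P̃_{β,n+2}(s) = (s - β(n+2)) P̃_{β,n+1}(s) - (n+1)(n+2) P̃_{β,n}(s)`. -/
noncomputable def meixnerP (β : ℝ) : ℕ → ℝ → ℝ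
  | 0 => fun _ => 1
  | 1 => fun s => s - β
  | n + 2 => fun s =>
      (s - β * (n + 2)) * meixnerP β (n + 1) s - (n + 1) * (n + 2) * meixnerP β n s

/-- `p_β = (β - √(β²-4))/(β + √(β²-4))` for `β > 2`. -/
noncomputable def pPascal (β : ℝ) : ℝ :=
  (β - Real.sqrt (β ^ 2 - 4)) / (β + Real.sqrt (β ^ 2 - 4))

namespace MeixnerAux

theorem exists_q {β : ℝ} (hβ : 2 < β) :
    ∃ q : ℝ, 0 < q ∧ q < 1 ∧ pPascal β = q ^ 2 ∧
      Real.sqrt (β ^ 2 - 4) * q = 1 - q ^ 2 ∧ β * q = 1 + q ^ 2 := by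
  have hδ : (0:ℝ) < β ^ 2 - 4 := by nlinarith
  set s := Real.sqrt (β ^ 2 - 4) with hs
  have hs2 : s ^ 2 = β ^ 2 - 4 := Real.sq_sqrt hδ.le
  have hs0 : 0 < s := Real.sqrt_pos.2 hδ
  have hsβ : s < β := by nlinarith
  have hbs : 0 < β + s := by linarith
  have h4 : (β - s) * (β + s) = 4 := by nlinarith [hs2]
  refine ⟨(β - s)/2, by linarith, by nlinarith, ?_, by nlinarith, by nlinarith⟩
  have : pPascal β = (β - s)/(β + s) := rfl
  rw [this]
  rw [div_eq_iff (by linarith : β + s ≠ 0)]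
  ring_nf
  nlinarith [h4]

/-- `s = √(β²-4)`. -/
noncomputable def sB (β : ℝ) : ℝ := Real.sqrt (β ^ 2 - 4)

/-- `f n k = P̃_{β,n}(s(k+1))`. -/
noncomputable def fM (β : ℝ) (n k : ℕ) : ℝ := meixnerP β n (sB β * (k + 1))

theorem fM_zero (β : ℝ) (k : ℕ) : fM β 0 k = 1 := rfl

theorem fM_one (β : ℝ) (k : ℕ) : fM β 1 k = sB β * (k+1) - β := rfl

theorem fM_rec (β : ℝ) (n k : ℕ) :
    fM β (n+2) k = (sB β * (k+1) - β*(n+2)) * fM β (n+1) k - (n+1)*(n+2) * fM β n k := by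
  simp only [fM, meixnerP] <;> (push_cast; ring)

/-- uniform pointwise three-term recurrence, with junk value convention at `n = 0`. -/
theorem point_rec (β : ℝ) (n k : ℕ) :
    sB β * (k+1) * fM β n k =
      fM β (n+1) k + β*(n+1) * fM β n k + (n:ℝ)*(n+1) * fM β (n-1) k := by
  cases n with
  | zero => rw [fM_one, fM_zero]; push_cast; ring
  | succ m =>
      rw [fM_rec, Nat.succ_sub_one] <;> (push_cast; ring)

theorem exists_bound (β : ℝ) (hβ : 2 < β) (n : ℕ) :
    ∃ C : ℝ, 0 ≤ C ∧ ∀ k : ℕ, |fM β n k| ≤ C * ((k:ℝ)+1)^n := by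
  have hs0 : 0 ≤ sB β := Real.sqrt_nonneg _
  induction n using Nat.twoStepInduction with
  | zero => exact ⟨1, zero_le_one, fun k => by simp [fM_zero]⟩
  | one =>
      refine ⟨sB β + β, by linarith, fun k => ?_⟩
      have hk : (0:ℝ) ≤ (k:ℝ) + 1 := by positivity
      rw [fM_one, pow_one]
      have h1 : |sB β * (k+1) - β| ≤ sB β * ((k:ℝ)+1) + β := by
        rw [abs_sub_comm]
        calc |β - sB β * (k+1)| ≤ |β| + |sB β * ((k:ℝ)+1)| := abs_sub _ _
          _ = β + sB β * ((k:ℝ)+1) := by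
              rw [abs_of_nonneg (by linarith), abs_of_nonneg (by positivity)]
          _ = sB β * ((k:ℝ)+1) + β := by ring
      calc |sB β * (k+1) - β| ≤ sB β * ((k:ℝ)+1) + β := h1
        _ ≤ sB β * ((k:ℝ)+1) + β * ((k:ℝ)+1) := by nlinarith
        _ = (sB β + β) * ((k:ℝ)+1) := by ring
  | more n ih0 ih1 =>
      obtain ⟨C0, hC0, h0⟩ := ih0
      obtain ⟨C1, hC1, h1⟩ := ih1
      refine ⟨(sB β + β*(n+2))*C1 + (n+1)*(n+2)*C0, by positivity, fun k => ?_⟩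
      have hk1 : (1:ℝ) ≤ (k:ℝ) + 1 := by norm_num
      have hkp : ∀ m : ℕ, (0:ℝ) < ((k:ℝ)+1)^m := fun m => by positivity
      have hpow : ((k:ℝ)+1)^n ≤ ((k:ℝ)+1)^(n+2) := pow_le_pow_right₀ hk1 (by omega)
      have hpow1 : ((k:ℝ)+1)^(n+1) * ((k:ℝ)+1) = ((k:ℝ)+1)^(n+2) := by ring
      rw [fM_rec]
      have e1 : |(sB β * (k+1) - β*(n+2)) * fM β (n+1) k| ≤
          (sB β * ((k:ℝ)+1) + β*(n+2)) * (C1 * ((k:ℝ)+1)^(n+1)) := by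
        rw [abs_mul]
        apply mul_le_mul _ (h1 k) (abs_nonneg _) (by positivity)
        calc |sB β * (k+1) - β*(n+2)| ≤ |sB β * ((k:ℝ)+1)| + |β*((n:ℝ)+2)| := abs_sub _ _
          _ = sB β * ((k:ℝ)+1) + β*((n:ℝ)+2) := by
              rw [abs_of_nonneg (by positivity), abs_of_nonneg (by positivity)]
      calc |(sB β * (k+1) - β*(n+2)) * fM β (n+1) k - (n+1)*(n+2) * fM β n k|
          ≤ |(sB β * (k+1) - β*(n+2)) * fM β (n+1) k| + |((n:ℝ)+1)*((n:ℝ)+2) * fM β n k| :=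
            abs_sub _ _
        _ ≤ (sB β * ((k:ℝ)+1) + β*(n+2)) * (C1 * ((k:ℝ)+1)^(n+1))
            + ((n:ℝ)+1)*((n:ℝ)+2) * (C0 * ((k:ℝ)+1)^n) := by
            refine add_le_add e1 ?_
            rw [abs_mul, abs_of_nonneg (by positivity : (0:ℝ) ≤ ((n:ℝ)+1)*((n:ℝ)+2))]
            exact mul_le_mul_of_nonneg_left (h0 k) (by positivity)
        _ ≤ ((sB β + β*(n+2))*C1 + (n+1)*(n+2)*C0) * ((k:ℝ)+1)^(n+2) := by
            have b1 : (sB β * ((k:ℝ)+1) + β*(n+2)) * (C1 * ((k:ℝ)+1)^(n+1))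
                ≤ (sB β + β*(n+2)) * C1 * ((k:ℝ)+1)^(n+2) := by
              have hb0 : (0:ℝ) ≤ β := by linarith
              have hx : (0:ℝ) ≤ β*((n:ℝ)+2)*(k:ℝ) :=
                mul_nonneg (mul_nonneg hb0 (by positivity)) (Nat.cast_nonneg k)
              have : sB β * ((k:ℝ)+1) + β*(n+2) ≤ (sB β + β*(n+2)) * ((k:ℝ)+1) := by nlinarith
              calc (sB β * ((k:ℝ)+1) + β*(n+2)) * (C1 * ((k:ℝ)+1)^(n+1))
                  ≤ ((sB β + β*(n+2)) * ((k:ℝ)+1)) * (C1 * ((k:ℝ)+1)^(n+1)) := by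
                    apply mul_le_mul_of_nonneg_right this (by positivity)
                _ = (sB β + β*(n+2)) * C1 * ((k:ℝ)+1)^(n+2) := by ring
            have b0 : ((n:ℝ)+1)*((n:ℝ)+2) * (C0 * ((k:ℝ)+1)^n)
                ≤ (n+1)*(n+2)*C0 * ((k:ℝ)+1)^(n+2) := by
              calc ((n:ℝ)+1)*((n:ℝ)+2) * (C0 * ((k:ℝ)+1)^n)
                  ≤ ((n:ℝ)+1)*((n:ℝ)+2) * (C0 * ((k:ℝ)+1)^(n+2)) := by
                    apply mul_le_mul_of_nonneg_left
                      (mul_le_mul_of_nonneg_left hpow hC0) (by positivity)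
                _ = (n+1)*(n+2)*C0 * ((k:ℝ)+1)^(n+2) := by ring
            calc (sB β * ((k:ℝ)+1) + β*(n+2)) * (C1 * ((k:ℝ)+1)^(n+1))
                + ((n:ℝ)+1)*((n:ℝ)+2) * (C0 * ((k:ℝ)+1)^n)
                ≤ (sB β + β*(n+2)) * C1 * ((k:ℝ)+1)^(n+2) + (n+1)*(n+2)*C0 * ((k:ℝ)+1)^(n+2) :=
                  add_le_add b1 b0
              _ = ((sB β + β*(n+2))*C1 + (n+1)*(n+2)*C0) * ((k:ℝ)+1)^(n+2) := by ring

theorem pPascal_pos {β : ℝ} (hβ : 2 < β) : 0 < pPascal β := by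
  have hδ : (0:ℝ) < β ^ 2 - 4 := by nlinarith
  have hs2 : Real.sqrt (β^2-4) ^ 2 = β ^ 2 - 4 := Real.sq_sqrt hδ.le
  have hs0 : 0 < Real.sqrt (β^2-4) := Real.sqrt_pos.2 hδ
  have hsβ : Real.sqrt (β^2-4) < β := by nlinarith
  exact div_pos (by linarith) (by linarith)

theorem pPascal_lt_one {β : ℝ} (hβ : 2 < β) : pPascal β < 1 := by
  have hδ : (0:ℝ) < β ^ 2 - 4 := by nlinarith
  have hs0 : 0 < Real.sqrt (β^2-4) := Real.sqrt_pos.2 hδ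
  have hs2 : Real.sqrt (β^2-4) ^ 2 = β ^ 2 - 4 := Real.sq_sqrt hδ.le
  have hsβ : Real.sqrt (β^2-4) < β := by nlinarith
  rw [pPascal, div_lt_one (by linarith)]
  linarith

theorem summable_base {β : ℝ} (hβ : 2 < β) (N : ℕ) :
    Summable (fun k : ℕ => ((k:ℝ)+1)^N * pPascal β ^ (k+1)) := by
  have h1 : Summable (fun k : ℕ => (k:ℝ)^N * pPascal β ^ k) :=
    summable_pow_mul_geometric_of_norm_lt_one N
      (by rw [Real.norm_eq_abs, abs_of_pos (pPascal_pos hβ)]; exact pPascal_lt_one hβ)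
  have h2 := (summable_nat_add_iff 1).2 h1
  exact h2.congr fun k => by push_cast; ring

theorem summable_of_le {β : ℝ} (hβ : 2 < β) {g : ℕ → ℝ} {C : ℝ} {N : ℕ}
    (h : ∀ k, |g k| ≤ C * ((k:ℝ)+1)^N) :
    Summable (fun k : ℕ => pPascal β ^ (k+1) * g k) := by
  have hp0 : 0 < pPascal β := pPascal_pos hβ
  refine Summable.of_norm_bounded (g := fun k => C * (((k:ℝ)+1)^N * pPascal β^(k+1)))
    ((summable_base hβ N).mul_left C) (fun k => ?_)
  rw [Real.norm_eq_abs, abs_mul, abs_of_pos (by positivity : (0:ℝ) < pPascal β^(k+1))]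
  calc pPascal β^(k+1) * |g k| ≤ pPascal β^(k+1) * (C * ((k:ℝ)+1)^N) :=
        mul_le_mul_of_nonneg_left (h k) (by positivity)
    _ = C * (((k:ℝ)+1)^N * pPascal β^(k+1)) := by ring

theorem summable_T {β : ℝ} (hβ : 2 < β) (a m n : ℕ) :
    Summable (fun k : ℕ => ((k:ℝ)+1)^a * pPascal β ^ (k+1) * (fM β m k * fM β n k)) := by
  obtain ⟨Cm, hCm, hm⟩ := exists_bound β hβ m
  obtain ⟨Cn, hCn, hn⟩ := exists_bound β hβ n
  have h : ∀ k : ℕ, |((k:ℝ)+1)^a * (fM β m k * fM β n k)| ≤ Cm*Cn * ((k:ℝ)+1)^(a+m+n) := by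
    intro k
    calc |((k:ℝ)+1)^a * (fM β m k * fM β n k)|
        = ((k:ℝ)+1)^a * (|fM β m k| * |fM β n k|) := by
          rw [abs_mul, abs_mul, abs_of_nonneg (by positivity : (0:ℝ) ≤ ((k:ℝ)+1)^a)]
      _ ≤ ((k:ℝ)+1)^a * ((Cm * ((k:ℝ)+1)^m) * (Cn * ((k:ℝ)+1)^n)) := by
          gcongr
          · exact hm k
          · exact hn k
      _ = Cm*Cn * ((k:ℝ)+1)^(a+m+n) := by rw [pow_add, pow_add]; ring
  exact (summable_of_le hβ h).congr fun k => by ring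

theorem summable_A {β : ℝ} (hβ : 2 < β) (a r n : ℕ) :
    Summable (fun k : ℕ =>
      ((k:ℝ)+1)^a * pPascal β ^ (k+1) * ((k.descFactorial r : ℝ) * fM β n k)) := by
  obtain ⟨Cn, hCn, hn⟩ := exists_bound β hβ n
  have hd : ∀ k : ℕ, ((k.descFactorial r : ℝ)) ≤ ((k:ℝ)+1)^r := by
    intro k
    calc ((k.descFactorial r : ℝ)) ≤ ((k:ℝ))^r := by
          exact_mod_cast Nat.cast_le.2 (Nat.descFactorial_le_pow k r) |>.trans_eq
            (by push_cast; ring)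
      _ ≤ ((k:ℝ)+1)^r := pow_le_pow_left₀ (Nat.cast_nonneg k) (by linarith) r
  have h : ∀ k : ℕ, |((k:ℝ)+1)^a * ((k.descFactorial r : ℝ) * fM β n k)|
      ≤ Cn * ((k:ℝ)+1)^(a+r+n) := by
    intro k
    calc |((k:ℝ)+1)^a * ((k.descFactorial r : ℝ) * fM β n k)|
        = ((k:ℝ)+1)^a * ((k.descFactorial r : ℝ) * |fM β n k|) := by
          rw [abs_mul, abs_mul, abs_of_nonneg (by positivity : (0:ℝ) ≤ ((k:ℝ)+1)^a),
            abs_of_nonneg (by positivity : (0:ℝ) ≤ ((k.descFactorial r : ℕ):ℝ))]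
      _ ≤ ((k:ℝ)+1)^a * (((k:ℝ)+1)^r * (Cn * ((k:ℝ)+1)^n)) := by
          gcongr
          · exact hd k
          · exact hn k
      _ = Cn * ((k:ℝ)+1)^(a+r+n) := by rw [pow_add, pow_add]; ring
  exact (summable_of_le hβ h).congr fun k => by ring

theorem summable_base' {β : ℝ} (hβ : 2 < β) (N : ℕ) :
    Summable (fun k : ℕ => ((k:ℝ)+1)^N * pPascal β ^ k) := by
  have hp0 : 0 < pPascal β := pPascal_pos hβ
  refine ((summable_base hβ N).mul_left (pPascal β)⁻¹).congr fun k => ?_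
  field_simp
  ring

theorem summable_choose {β : ℝ} (hβ : 2 < β) (r : ℕ) :
    Summable (fun k : ℕ => (k.choose r : ℝ) * pPascal β ^ k) := by
  have hp0 : 0 < pPascal β := pPascal_pos hβ
  refine Summable.of_norm_bounded (summable_base' hβ r) (fun k => ?_)
  rw [Real.norm_eq_abs, abs_mul, abs_of_nonneg (by positivity : (0:ℝ) ≤ ((k.choose r : ℕ):ℝ)),
    abs_of_nonneg (by positivity : (0:ℝ) ≤ pPascal β ^ k)]
  have : ((k.choose r : ℕ):ℝ) ≤ ((k:ℝ)+1)^r := by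
    calc ((k.choose r : ℕ):ℝ) ≤ ((k^r : ℕ):ℝ) := Nat.cast_le.2 (Nat.choose_le_pow k r)
      _ ≤ ((k:ℝ)+1)^r := by push_cast; exact pow_le_pow_left₀ (Nat.cast_nonneg k) (by linarith) r
  exact mul_le_mul_of_nonneg_right this (by positivity)

theorem tsum_choose {β : ℝ} (hβ : 2 < β) (r : ℕ) :
    ∑' k : ℕ, (k.choose r : ℝ) * pPascal β ^ k
      = pPascal β ^ r / (1 - pPascal β) ^ (r+1) := by
  have hp0 : 0 < pPascal β := pPascal_pos hβ
  have hp1 : pPascal β < 1 := pPascal_lt_one hβ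
  have h1p : (1:ℝ) - pPascal β ≠ 0 := by linarith
  set p := pPascal β with hp
  induction r with
  | zero => simpa using tsum_geometric_of_lt_one hp0.le hp1
  | succ r ih =>
      set S := ∑' k : ℕ, (k.choose (r+1) : ℝ) * p ^ k with hS
      have h0 : S = ((0:ℕ).choose (r+1) : ℝ) * p ^ 0
          + ∑' k : ℕ, ((k+1).choose (r+1) : ℝ) * p ^ (k+1) :=
        Summable.tsum_eq_zero_add (summable_choose hβ (r+1))
      have h2 : ∑' k : ℕ, ((k+1).choose (r+1) : ℝ) * p ^ (k+1)
          = p * (∑' k : ℕ, (k.choose r : ℝ) * p ^ k)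
            + p * ∑' k : ℕ, (k.choose (r+1) : ℝ) * p ^ k := by
        rw [← tsum_mul_left, ← tsum_mul_left,
          ← Summable.tsum_add ((summable_choose hβ r).mul_left p)
            ((summable_choose hβ (r+1)).mul_left p)]
        refine tsum_congr fun k => ?_
        rw [Nat.choose_succ_succ]
        push_cast
        ring
      rw [h2, ih] at h0
      have hS2 : S = p * (p ^ r / (1-p)^(r+1)) + p * S := by
        simpa [Nat.choose_eq_zero_of_lt] using h0
      have : S * (1 - p) * (1-p)^(r+1) = p^(r+1) := by
        field_simp at hS2
        linear_combination hS2
      have hfin : S = p^(r+1) / (1-p)^(r+1+1) := by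
        rw [eq_div_iff (pow_ne_zero _ h1p)]
        calc S * (1-p)^(r+1+1) = S * (1-p) * (1-p)^(r+1) := by ring
          _ = p^(r+1) := this
      exact hfin

theorem summable_descFac {β : ℝ} (hβ : 2 < β) (r : ℕ) :
    Summable (fun k : ℕ => (k.descFactorial r : ℝ) * pPascal β ^ k) := by
  refine ((summable_choose hβ r).mul_left (r.factorial : ℝ)).congr fun k => ?_
  rw [Nat.descFactorial_eq_factorial_mul_choose]
  push_cast
  ring

theorem tsum_descFac {β : ℝ} (hβ : 2 < β) (r : ℕ) :
    ∑' k : ℕ, (k.descFactorial r : ℝ) * pPascal β ^ k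
      = (r.factorial : ℝ) * pPascal β ^ r / (1 - pPascal β) ^ (r+1) := by
  have h1 : ∑' k : ℕ, (k.descFactorial r : ℝ) * pPascal β ^ k
      = ∑' k : ℕ, (r.factorial : ℝ) * ((k.choose r : ℝ) * pPascal β ^ k) := by
    refine tsum_congr fun k => ?_
    rw [Nat.descFactorial_eq_factorial_mul_choose]
    push_cast
    ring
  rw [h1, tsum_mul_left, tsum_choose hβ r]
  ring

/-- the moments: `∑ (k+1) p^(k+1) (k)_r = (r+1)! p^(r+1) / (1-p)^(r+2)`. -/
theorem moment_eq {β : ℝ} (hβ : 2 < β) (r : ℕ) :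
    ∑' k : ℕ, ((k:ℝ)+1) * pPascal β ^ (k+1) * (k.descFactorial r : ℝ)
      = ((r+1).factorial : ℝ) * pPascal β ^ (r+1) / (1 - pPascal β) ^ (r+2) := by
  set p := pPascal β with hp
  set g : ℕ → ℝ := fun j => (j.descFactorial (r+1) : ℝ) * p ^ j with hg
  have hsum : Summable g := summable_descFac hβ (r+1)
  have h0 : ∑' j, g j = g 0 + ∑' k, g (k+1) := Summable.tsum_eq_zero_add hsum
  have hg0 : g 0 = 0 := by simp [hg, Nat.zero_descFactorial_succ]
  have h1 : ∑' k : ℕ, ((k:ℝ)+1) * p ^ (k+1) * (k.descFactorial r : ℝ)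
      = ∑' k, g (k+1) := by
    refine tsum_congr fun k => ?_
    simp only [hg, Nat.succ_descFactorial_succ]
    push_cast
    ring
  rw [h1]
  have h2 : ∑' k, g (k+1) = ∑' j, g j := by rw [h0, hg0, zero_add]
  rw [h2, hg, tsum_descFac hβ (r+1)]

theorem descFac_succ_real (k r : ℕ) :
    ((k.descFactorial (r+1) : ℕ):ℝ) = ((k:ℝ) - r) * (k.descFactorial r : ℝ) := by
  rcases le_or_gt r k with h | h
  · rw [Nat.descFactorial_succ]
    push_cast [Nat.cast_sub h]
    ring
  · rw [Nat.descFactorial_of_lt h, Nat.descFactorial_of_lt (h.trans (Nat.lt_succ_self r))]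
    simp

/-- the A-family: `A r n = ∑ (k+1) p^(k+1) (k)_r P̃_n(s(k+1))`. -/
noncomputable def Afam (β : ℝ) (r n : ℕ) : ℝ :=
  ∑' k : ℕ, ((k:ℝ)+1) * pPascal β ^ (k+1) * ((k.descFactorial r : ℝ) * fM β n k)

theorem summable_A1 {β : ℝ} (hβ : 2 < β) (r n : ℕ) :
    Summable (fun k : ℕ =>
      ((k:ℝ)+1) * pPascal β ^ (k+1) * ((k.descFactorial r : ℝ) * fM β n k)) :=
  (summable_A hβ 1 r n).congr fun k => by rw [pow_one]

theorem point_A (β : ℝ) (r n k : ℕ) :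
    ((k:ℝ)+1) * pPascal β ^ (k+1) * ((k.descFactorial r : ℝ) * fM β (n+1) k)
      = sB β * (((k:ℝ)+1) * pPascal β ^ (k+1) * ((k.descFactorial (r+1) : ℝ) * fM β n k))
        + ((sB β * ((r:ℝ)+1) - β*((n:ℝ)+1)) *
            (((k:ℝ)+1) * pPascal β ^ (k+1) * ((k.descFactorial r : ℝ) * fM β n k))
          + (-((n:ℝ)*((n:ℝ)+1))) *
            (((k:ℝ)+1) * pPascal β ^ (k+1) * ((k.descFactorial r : ℝ) * fM β (n-1) k))) := by
  have h1 := point_rec β n k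
  have h2 := descFac_succ_real k r
  push_cast at h1 ⊢
  linear_combination (-(((k:ℝ)+1) * pPascal β^(k+1) * ((k.descFactorial r : ℕ):ℝ))) * h1
    - (sB β * ((k:ℝ)+1) * pPascal β^(k+1) * fM β n k) * h2

theorem Afam_rec {β : ℝ} (hβ : 2 < β) (r n : ℕ) :
    Afam β r (n+1) = sB β * Afam β (r+1) n
      + ((sB β * ((r:ℝ)+1) - β*((n:ℝ)+1)) * Afam β r n
        + (-((n:ℝ)*((n:ℝ)+1))) * Afam β r (n-1)) := by
  unfold Afam
  rw [← tsum_mul_left, ← tsum_mul_left, ← tsum_mul_left,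
    ← Summable.tsum_add ((summable_A1 hβ r n).mul_left _) ((summable_A1 hβ r (n-1)).mul_left _),
    ← Summable.tsum_add ((summable_A1 hβ (r+1) n).mul_left _)
      (((summable_A1 hβ r n).mul_left _).add ((summable_A1 hβ r (n-1)).mul_left _))]
  exact tsum_congr fun k => point_A β r n k

/-- closed form for the A-family. -/
noncomputable def Fc (β : ℝ) (r n : ℕ) : ℝ :=
  ((r+1).factorial : ℝ) * (r.descFactorial n : ℝ) * sB β ^ n * pPascal β ^ (r+1)
    / (1 - pPascal β) ^ (r+n+2)

theorem Afam_zero {β : ℝ} (hβ : 2 < β) (r : ℕ) : Afam β r 0 = Fc β r 0 := by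
  have h1 : Afam β r 0 = ∑' k : ℕ, ((k:ℝ)+1) * pPascal β ^ (k+1) * (k.descFactorial r : ℝ) := by
    unfold Afam
    exact tsum_congr fun k => by rw [fM_zero]; ring
  rw [h1, moment_eq hβ r]
  unfold Fc
  simp [Nat.descFactorial_zero]

theorem Afam_eq {β : ℝ} (hβ : 2 < β) : ∀ n r, Afam β r n = Fc β r n := by
  obtain ⟨q, hq0, hq1, hpq, hsq, hbq⟩ := exists_q hβ
  have hqne : q ≠ 0 := ne_of_gt hq0
  have hEne : 1 - q^2 ≠ 0 := by nlinarith
  have hs_eq : sB β = (1 - q^2)/q := by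
    rw [eq_div_iff hqne]; exact hsq
  have hb_eq : β = (1 + q^2)/q := by
    rw [eq_div_iff hqne]; exact hbq
  intro n
  induction n using Nat.twoStepInduction with
  | zero => exact Afam_zero hβ
  | one =>
      intro r
      rw [show (1:ℕ) = 0 + 1 by rfl, Afam_rec hβ r 0]
      norm_num
      rw [Afam_zero hβ, Afam_zero hβ]
      unfold Fc
      rw [hpq, hs_eq, hb_eq]
      rw [Nat.descFactorial_one, Nat.descFactorial_zero, Nat.descFactorial_zero,
        Nat.factorial_succ (r+1)]
      push_cast
      field_simp
      ring
  | more n ih0 ih1 =>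
      intro r
      rw [show n+2 = (n+1)+1 by rfl, Afam_rec hβ r (n+1)]
      rw [Nat.succ_sub_one, ih0 r, ih1 r, ih1 (r+1)]
      unfold Fc
      rw [hpq, hs_eq, hb_eq]
      rw [descFac_succ_real r (n+1), descFac_succ_real r n, Nat.succ_descFactorial_succ,
        Nat.factorial_succ (r+1)]
      push_cast
      simp only [div_pow]
      field_simp
      ring

/-- the Gram "matrix" entries. -/
noncomputable def Tb (β : ℝ) (m n : ℕ) : ℝ :=
  ∑' k : ℕ, ((k:ℝ)+1) * pPascal β ^ (k+1) * (fM β m k * fM β n k)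

/-- the sums with an extra factor `s(k+1)`. -/
noncomputable def Ub (β : ℝ) (m n : ℕ) : ℝ :=
  ∑' k : ℕ, ((k:ℝ)+1) * pPascal β ^ (k+1) * (sB β * ((k:ℝ)+1) * (fM β m k * fM β n k))

theorem summable_T1 {β : ℝ} (hβ : 2 < β) (m n : ℕ) :
    Summable (fun k : ℕ => ((k:ℝ)+1) * pPascal β ^ (k+1) * (fM β m k * fM β n k)) :=
  (summable_T hβ 1 m n).congr fun k => by rw [pow_one]

theorem Tb_symm (β : ℝ) (m n : ℕ) : Tb β m n = Tb β n m :=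
  tsum_congr fun k => by ring

theorem Ub_eq_right {β : ℝ} (hβ : 2 < β) (m n : ℕ) :
    Ub β m n = Tb β m (n+1) + (β*((n:ℝ)+1)) * Tb β m n
      + ((n:ℝ)*((n:ℝ)+1)) * Tb β m (n-1) := by
  unfold Ub Tb
  rw [← tsum_mul_left, ← tsum_mul_left,
    ← Summable.tsum_add (summable_T1 hβ m (n+1)) ((summable_T1 hβ m n).mul_left _),
    ← Summable.tsum_add ((summable_T1 hβ m (n+1)).add ((summable_T1 hβ m n).mul_left _))
      ((summable_T1 hβ m (n-1)).mul_left _)]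
  refine tsum_congr fun k => ?_
  have h := point_rec β n k
  linear_combination (((k:ℝ)+1) * pPascal β ^ (k+1) * fM β m k) * h

theorem Ub_eq_left {β : ℝ} (hβ : 2 < β) (m n : ℕ) :
    Ub β m n = Tb β (m+1) n + (β*((m:ℝ)+1)) * Tb β m n
      + ((m:ℝ)*((m:ℝ)+1)) * Tb β (m-1) n := by
  unfold Ub Tb
  rw [← tsum_mul_left, ← tsum_mul_left,
    ← Summable.tsum_add (summable_T1 hβ (m+1) n) ((summable_T1 hβ m n).mul_left _),
    ← Summable.tsum_add ((summable_T1 hβ (m+1) n).add ((summable_T1 hβ m n).mul_left _))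
      ((summable_T1 hβ (m-1) n).mul_left _)]
  refine tsum_congr fun k => ?_
  have h := point_rec β m k
  linear_combination (((k:ℝ)+1) * pPascal β ^ (k+1) * fM β n k) * h

/-- key cross identity (++). -/
theorem Tcross {β : ℝ} (hβ : 2 < β) (m n : ℕ) :
    Tb β (m+1) n = Tb β m (n+1) + (β*((n:ℝ)+1)) * Tb β m n
      + ((n:ℝ)*((n:ℝ)+1)) * Tb β m (n-1)
      - (β*((m:ℝ)+1)) * Tb β m n - ((m:ℝ)*((m:ℝ)+1)) * Tb β (m-1) n := by
  have h1 := Ub_eq_right hβ m n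
  have h2 := Ub_eq_left hβ m n
  linear_combination h1 - h2

theorem Tb_zero_eq (β : ℝ) (n : ℕ) : Tb β 0 n = Afam β 0 n := by
  unfold Tb Afam
  exact tsum_congr fun k => by rw [fM_zero]; simp

theorem ortho0 {β : ℝ} (hβ : 2 < β) (n : ℕ) (hn : 1 ≤ n) : Tb β 0 n = 0 := by
  rw [Tb_zero_eq, Afam_eq hβ]
  obtain ⟨m, rfl⟩ := Nat.exists_eq_add_of_le' hn
  unfold Fc
  rw [Nat.zero_descFactorial_succ]
  simp

theorem ortho {β : ℝ} (hβ : 2 < β) : ∀ m n, m < n → Tb β m n = 0 := by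
  intro m
  induction m using Nat.twoStepInduction with
  | zero => exact fun n hn => ortho0 hβ n hn
  | one =>
      intro n hn
      have h := Tcross hβ 0 n
      rw [ortho0 hβ (n+1) (by omega), ortho0 hβ n (by omega),
        ortho0 hβ (n-1) (by omega)] at h
      simpa using h
  | more m ih0 ih1 =>
      intro n hn
      have h := Tcross hβ (m+1) n
      rw [Nat.succ_sub_one] at h
      rw [ih1 (n+1) (by omega), ih1 n (by omega), ih1 (n-1) (by omega),
        ih0 n (by omega)] at h
      simpa using h

theorem Tb_zero_zero {β : ℝ} (hβ : 2 < β) :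
    Tb β 0 0 = pPascal β / (1 - pPascal β)^2 := by
  rw [Tb_zero_eq, Afam_eq hβ]
  unfold Fc
  norm_num

theorem Tb_diag {β : ℝ} (hβ : 2 < β) : ∀ n,
    Tb β n n = (n.factorial : ℝ) * ((n+1).factorial : ℝ) * pPascal β / (1 - pPascal β)^2 := by
  intro n
  induction n with
  | zero => rw [Tb_zero_zero hβ]; norm_num
  | succ n ih =>
      have h := Tcross hβ n (n+1)
      rw [Nat.succ_sub_one] at h
      rw [ortho hβ n (n+1+1) (by omega), ortho hβ n (n+1) (by omega)] at h
      have hz : ((n:ℝ)*((n:ℝ)+1)) * Tb β (n-1) (n+1) = 0 := by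
        cases n with
        | zero => simp
        | succ m => rw [Nat.succ_sub_one, ortho hβ m (m+1+1) (by omega)]; ring
      rw [hz, ih] at h
      rw [h, Nat.factorial_succ (n+1), Nat.factorial_succ n]
      push_cast
      ring

theorem hone {β : ℝ} (hβ : 2 < β) : (1:ℝ) - pPascal β ≠ 0 := by
  have := pPascal_lt_one hβ; linarith

theorem key_sq {β : ℝ} (hβ : 2 < β) :
    (β^2 - 4) * pPascal β = (1 - pPascal β)^2 := by
  obtain ⟨q, hq0, hq1, hpq, hsq, hbq⟩ := exists_q hβ
  have hδ : (0:ℝ) ≤ β ^ 2 - 4 := by nlinarith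
  have h1 : Real.sqrt (β^2-4) ^ 2 = β^2 - 4 := Real.sq_sqrt hδ
  calc (β^2 - 4) * pPascal β = (Real.sqrt (β^2-4) * q)^2 := by
        rw [mul_pow, h1, hpq]
    _ = (1 - q^2)^2 := by rw [hsq]
    _ = (1 - pPascal β)^2 := by rw [hpq]

end MeixnerAux

/-- For `β > 2`, the squared `L²(ν̃_β)`-norm of the `n`-th monic Meixner-type polynomial with
respect to the Pascal measure `ν̃_β = (β²-4) Σ_{k≥1} p_β^k k δ_{√(β²-4) k}` equals `n! (n+1)!`:
the series `Σ_{k≥1} (β²-4) k p_β^k P̃_{β,n}(√(β²-4) k)²` converges and its sum is `n! (n+1)!`.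
(The index `k : ℕ` below stands for `k + 1 ≥ 1`.) -/
theorem meixnerP_norm_pascal (β : ℝ) (hβ : 2 < β) (n : ℕ) :
    Summable (fun k : ℕ =>
      (β ^ 2 - 4) * (k + 1 : ℕ) * pPascal β ^ (k + 1) *
        meixnerP β n (Real.sqrt (β ^ 2 - 4) * (k + 1 : ℕ)) ^ 2) ∧
    ∑' k : ℕ,
      (β ^ 2 - 4) * (k + 1 : ℕ) * pPascal β ^ (k + 1) *
        meixnerP β n (Real.sqrt (β ^ 2 - 4) * (k + 1 : ℕ)) ^ 2 =
      (n.factorial : ℝ) * ((n + 1).factorial : ℝ) := by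

  open MeixnerAux in
  have hfun : ∀ k : ℕ,
      (β ^ 2 - 4) * (k + 1 : ℕ) * pPascal β ^ (k + 1) *
        meixnerP β n (Real.sqrt (β ^ 2 - 4) * (k + 1 : ℕ)) ^ 2
      = (β^2 - 4) * (((k:ℝ)+1) * pPascal β ^ (k+1) * (fM β n k * fM β n k)) := by
    intro k
    have : meixnerP β n (Real.sqrt (β ^ 2 - 4) * ((k + 1 : ℕ):ℝ)) = fM β n k := by
      unfold fM sB
      norm_num
    rw [this]
    push_cast
    ring
  have h1p : (1:ℝ) - pPascal β ≠ 0 := hone hβ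
  constructor
  · exact ((summable_T1 hβ n n).mul_left (β^2-4)).congr fun k => (hfun k).symm
  · calc ∑' k : ℕ, (β ^ 2 - 4) * (k + 1 : ℕ) * pPascal β ^ (k + 1) *
          meixnerP β n (Real.sqrt (β ^ 2 - 4) * (k + 1 : ℕ)) ^ 2
        = ∑' k : ℕ, (β^2-4) * (((k:ℝ)+1) * pPascal β ^ (k+1) * (fM β n k * fM β n k)) :=
          tsum_congr hfun
      _ = (β^2-4) * Tb β n n := tsum_mul_left
      _ = (β^2-4) * ((n.factorial : ℝ) * ((n+1).factorial : ℝ)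
            * pPascal β / (1 - pPascal β)^2) := by rw [Tb_diag hβ n]
      _ = (n.factorial : ℝ) * ((n + 1).factorial : ℝ) := by
          have hk := key_sq hβ
          field_simp
          linear_combination hk
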